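/- Let γ > 0 and let P(0),…,P(K+1) and Q(0),…,Q(K+1) be arbitrary families of real symmetric n×n matrices. For any deterministic x₀ ∈ ℝⁿ and admissible disturbance ν, the cost J^K(x₀,ν) = Σ_{k=0}^{K} E[γ²‖ν(k)‖² − ‖z(k)‖²] satisfies: J^K(x₀,ν) = Σ_{k=0}^{K} E{ [x(k)−E x(k); ν(k)−E ν(k)]ᵀ M̃(P,k) [x(k)−E x(k); ν(k)−E ν(k)] } + Σ_{k=0}^{K} [E x(k); E ν(k)]ᵀ S̃(P,Q,k) [E x(k); E ν(k)] − E[(x(K+1)−E x(K+1))ᵀ P(K+1)(x(K+1)−E x(K+1))] − (E x(K+1))ᵀ Q(K+1)(E x(K+1)) + x₀ᵀ Q(0) x₀, where M̃(P,k) is the 2×2 block matrix with blocks M̃₁₁ = −P(k)+A(k)ᵀP(k+1)A(k)+C(k)ᵀP(k+1)C(k)−Φ(k)ᵀΦ(k), M̃₁₂ = A(k)ᵀP(k+1)B(k)+C(k)ᵀP(k+1)D(k), M̃₂₁ = M̃₁₂ᵀ, M̃₂₂ = γ²I_l+B(k)ᵀP(k+1)B(k)+D(k)ᵀP(k+1)D(k),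 and S̃(P,Q,k) is the 2×2 block matrix with blocks S̃₁₁ = −Q(k)+𝔸(k)ᵀQ(k+1)𝔸(k)+ℂ(k)ᵀP(k+1)ℂ(k)−Φ(k)ᵀΦ(k), S̃₁₂ = 𝔸(k)ᵀQ(k+1)𝔹(k)+ℂ(k)ᵀP(k+1)𝔻(k), S̃₂₁ = S̃₁₂ᵀ, S̃₂₂ = γ²I_l+𝔹(k)ᵀQ(k+1)𝔹(k)+𝔻(k)ᵀP(k+1)𝔻(k). -/

import Mathlib

open MeasureTheory ProbabilityTheory Matrix Finset

/-- The mean-field stochastic state recursion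
`x(k+1) = A x + Ã E x + B ν + B̃ E ν + (C x + C̃ E x + D ν + D̃ E ν)·ω(k)`. -/
noncomputable def mfState {Ω : Type*} [MeasurableSpace Ω] (μ : Measure Ω) {n l : ℕ}
    (A At C Ct : ℕ → Matrix (Fin n) (Fin n) ℝ)
    (B Bt D Dt : ℕ → Matrix (Fin n) (Fin l) ℝ)
    (W : ℕ → Ω → ℝ) (x0 : Fin n → ℝ) (ν : ℕ → Ω → Fin l → ℝ) :
    ℕ → Ω → Fin n → ℝ
  | 0 => fun _ => x0
  | (k+1) => fun a =>
      A k *ᵥ mfState μ A At C Ct B Bt D Dt W x0 ν k a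
      + At k *ᵥ (∫ b, mfState μ A At C Ct B Bt D Dt W x0 ν k b ∂μ)
      + B k *ᵥ ν k a + Bt k *ᵥ (∫ b, ν k b ∂μ)
      + W k a • (C k *ᵥ mfState μ A At C Ct B Bt D Dt W x0 ν k a
          + Ct k *ᵥ (∫ b, mfState μ A At C Ct B Bt D Dt W x0 ν k b ∂μ)
          + D k *ᵥ ν k a + Dt k *ᵥ (∫ b, ν k b ∂μ))

/-- Admissibility of a disturbance: square integrability and independence of the
noise `ω(k)` from the pair `(x(k), ν(k))`. -/
def mfAdmissible {Ω : Type*} [MeasurableSpace Ω] (μ : Measure Ω) {n l : ℕ} (K : ℕ)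
    (W : ℕ → Ω → ℝ) (x : ℕ → Ω → Fin n → ℝ) (ν : ℕ → Ω → Fin l → ℝ) : Prop :=
  (∀ k ≤ K, MemLp (ν k) 2 μ) ∧
  (∀ k ≤ K, IndepFun (fun a => (x k a, ν k a)) (W k) μ)

set_option linter.unusedVariables false

set_option linter.unusedSectionVars false

section Helpers
variable {Ω : Type*} [MeasurableSpace Ω] {μ : Measure Ω} [IsProbabilityMeasure μ]

noncomputable def mfSingleCLM (n : ℕ) (i : Fin n) : ℝ →L[ℝ] (Fin n → ℝ) :=
  (LinearMap.single ℝ (fun _ : Fin n => ℝ) i).toContinuousLinearMap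

lemma mf_pi_eq_sum_single {n : ℕ} (f : Ω → Fin n → ℝ) (a : Ω) :
    f a = ∑ i : Fin n, mfSingleCLM n i (f a i) := by
  simp only [mfSingleCLM, LinearMap.coe_toContinuousLinearMap']
  exact (Finset.univ_sum_single (f a)).symm

lemma mf_mul_integrable {f g : Ω → ℝ} (hf : MemLp f 2 μ) (hg : MemLp g 2 μ) :
    Integrable (fun a => f a * g a) μ := by
  have h := L2.integrable_inner (𝕜 := ℝ) (hf.toLp f) (hg.toLp g)
  simp only [RCLike.inner_apply, RCLike.conj_to_real] at h
  refine h.congr ?_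
  filter_upwards [hf.coeFn_toLp, hg.coeFn_toLp] with a h1 h2
  rw [h1, h2, mul_comm]

lemma mf_memLp_apply {n : ℕ} {f : Ω → Fin n → ℝ} (hf : MemLp f 2 μ) (i : Fin n) :
    MemLp (fun a => f a i) 2 μ :=
  ((ContinuousLinearMap.proj (R := ℝ) (φ := fun _ : Fin n => ℝ) i).comp_memLp' hf)

lemma mf_memLp_pi {n : ℕ} {f : Ω → Fin n → ℝ} (hf : ∀ i, MemLp (fun a => f a i) 2 μ) :
    MemLp f 2 μ := by
  have h : MemLp (fun a => ∑ i : Fin n, mfSingleCLM n i (f a i)) 2 μ :=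
    memLp_finset_sum _ (fun i _ => (mfSingleCLM n i).comp_memLp' (hf i))
  exact h.ae_eq (Filter.Eventually.of_forall (fun a => (mf_pi_eq_sum_single f a).symm))

lemma mf_integrable_pi {n : ℕ} {f : Ω → Fin n → ℝ} (hf : ∀ i, Integrable (fun a => f a i) μ) :
    Integrable f μ := by
  have h : Integrable (fun a => ∑ i : Fin n, mfSingleCLM n i (f a i)) μ :=
    integrable_finset_sum _ (fun i _ => (mfSingleCLM n i).integrable_comp (hf i))
  exact h.congr (Filter.Eventually.of_forall (fun a => (mf_pi_eq_sum_single f a).symm))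

lemma mf_memLp_mulVec {n p : ℕ} (M : Matrix (Fin p) (Fin n) ℝ) {f : Ω → Fin n → ℝ}
    (hf : MemLp f 2 μ) : MemLp (fun a => M *ᵥ f a) 2 μ := by
  refine mf_memLp_pi (fun i => ?_)
  have h : (fun a => (M *ᵥ f a) i) = fun a => ∑ j : Fin n, M i j * f a j := by
    funext a; simp [Matrix.mulVec, dotProduct]
  rw [h]
  exact memLp_finset_sum _ (fun j _ => (mf_memLp_apply hf j).const_mul (M i j))

lemma mf_integrable_dot {p : ℕ} {f g : Ω → Fin p → ℝ}
    (hf : MemLp f 2 μ) (hg : MemLp g 2 μ) :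
    Integrable (fun a => f a ⬝ᵥ g a) μ := by
  have h : ∀ a, f a ⬝ᵥ g a = ∑ i, f a i * g a i := fun a => rfl
  simp only [h]
  exact integrable_finset_sum _ (fun i _ =>
    mf_mul_integrable (mf_memLp_apply hf i) (mf_memLp_apply hg i))

lemma mf_integrable_qf {p q : ℕ} {f : Ω → Fin p → ℝ} {g : Ω → Fin q → ℝ}
    (hf : MemLp f 2 μ) (hg : MemLp g 2 μ) (M : Matrix (Fin p) (Fin q) ℝ) :
    Integrable (fun a => f a ⬝ᵥ M *ᵥ g a) μ :=
  mf_integrable_dot hf (mf_memLp_mulVec M hg)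

lemma mf_integrable_apply {n : ℕ} {f : Ω → Fin n → ℝ} (hf : Integrable f μ) (i : Fin n) :
    Integrable (fun a => f a i) μ :=
  (ContinuousLinearMap.proj (R := ℝ) (φ := fun _ : Fin n => ℝ) i).integrable_comp hf

lemma mf_integrable_dot_const {p : ℕ} {f : Ω → Fin p → ℝ}
    (hf : Integrable f μ) (c : Fin p → ℝ) :
    Integrable (fun a => f a ⬝ᵥ c) μ := by
  have h : ∀ a, f a ⬝ᵥ c = ∑ i, f a i * c i := fun a => rfl
  simp only [h]
  exact integrable_finset_sum _ (fun i _ => (mf_integrable_apply hf i).mul_const (c i))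


lemma mf_integral_apply {n : ℕ} {f : Ω → Fin n → ℝ} (hf : Integrable f μ) (i : Fin n) :
    (∫ a, f a ∂μ) i = ∫ a, f a i ∂μ :=
  ((ContinuousLinearMap.proj (R := ℝ) (φ := fun _ : Fin n => ℝ) i).integral_comp_comm hf).symm

lemma mf_integral_mulVec {n p : ℕ} (M : Matrix (Fin p) (Fin n) ℝ) {f : Ω → Fin n → ℝ}
    (hf : Integrable f μ) : ∫ a, M *ᵥ f a ∂μ = M *ᵥ ∫ a, f a ∂μ := by
  have h := (LinearMap.toContinuousLinearMap (Matrix.mulVecLin M)).integral_comp_comm hf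
  simpa using h

lemma mf_integral_dot_left {p : ℕ} {f : Ω → Fin p → ℝ} (hf : Integrable f μ) (c : Fin p → ℝ) :
    ∫ a, f a ⬝ᵥ c ∂μ = (∫ a, f a ∂μ) ⬝ᵥ c := by
  have h : ∀ a, f a ⬝ᵥ c = ∑ i, f a i * c i := fun a => rfl
  simp only [h, dotProduct]
  rw [integral_finset_sum _ (fun i _ => (mf_integrable_apply hf i).mul_const (c i))]
  refine Finset.sum_congr rfl (fun i _ => ?_)
  rw [integral_mul_const, mf_integral_apply hf]

lemma mf_integral_dot_right {p : ℕ} {f : Ω → Fin p → ℝ} (hf : Integrable f μ) (c : Fin p → ℝ) :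
    ∫ a, c ⬝ᵥ f a ∂μ = c ⬝ᵥ (∫ a, f a ∂μ) := by
  simp only [dotProduct_comm c]
  exact mf_integral_dot_left hf c

end Helpers
section Helpers2
variable {Ω : Type*} [MeasurableSpace Ω] {μ : Measure Ω} [IsProbabilityMeasure μ]

lemma mf_measurable_mulVec {E : Type*} [MeasurableSpace E] {p q : ℕ}
    {g : E → Fin q → ℝ} (hg : Measurable g) (M : Matrix (Fin p) (Fin q) ℝ) :
    Measurable (fun e => M *ᵥ g e) := by
  have h : Measurable (fun v : Fin q → ℝ => M *ᵥ v) :=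
    (LinearMap.toContinuousLinearMap (Matrix.mulVecLin M)).continuous.measurable
  exact h.comp hg

lemma mf_measurable_dot {E : Type*} [MeasurableSpace E] {p : ℕ}
    {g1 g2 : E → Fin p → ℝ} (h1 : Measurable g1) (h2 : Measurable g2) :
    Measurable (fun e => g1 e ⬝ᵥ g2 e) := by
  have h : ∀ e, g1 e ⬝ᵥ g2 e = ∑ i, g1 e i * g2 e i := fun e => rfl
  simp only [h]
  exact Finset.measurable_sum _ (fun i _ =>
    ((measurable_pi_apply i).comp h1).mul ((measurable_pi_apply i).comp h2))

lemma mf_indep_of_comp {E : Type*} [MeasurableSpace E] {y : Ω → E} {ω : Ω → ℝ}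
    (hind : IndepFun y ω μ) {ψ : E → ℝ} (hψ : Measurable ψ) {g : Ω → ℝ}
    (hg : ∀ a, g a = ψ (y a)) : IndepFun g ω μ := by
  have h := hind.comp hψ (measurable_id : Measurable (id : ℝ → ℝ))
  have hgy : g = ψ ∘ y := funext hg
  rw [hgy]; exact h

lemma mf_indep_sq {g ω : Ω → ℝ} (hind : IndepFun g ω μ) :
    IndepFun g (fun a => ω a * ω a) μ := by
  have h := hind.comp (measurable_id : Measurable (id : ℝ → ℝ))
    ((measurable_id.mul measurable_id) : Measurable (fun t : ℝ => t * t))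
  exact h

lemma mf_indep_integrable_mul {g ωf : Ω → ℝ} (hind : IndepFun g ωf μ)
    (hg : Integrable g μ) (hωf : Integrable ωf μ) :
    Integrable (fun a => ωf a * g a) μ := by
  have h := hind.integrable_mul hg hωf
  exact h.congr (Filter.Eventually.of_forall (fun a => mul_comm (g a) (ωf a)))

lemma mf_indep_integral_mul {g ωf : Ω → ℝ} (hind : IndepFun g ωf μ)
    (hg : Integrable g μ) (hωf : Integrable ωf μ) :
    ∫ a, ωf a * g a ∂μ = (∫ a, ωf a ∂μ) * ∫ a, g a ∂μ := by
  have h := hind.integral_mul_eq_mul_integral hg.aestronglyMeasurable hωf.aestronglyMeasurable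
  have h2 : ∫ a, ωf a * g a ∂μ = ∫ a, g a * ωf a ∂μ := by
    congr 1; funext a; exact mul_comm _ _
  rw [h2]
  rw [show (fun a => g a * ωf a) = g * ωf from rfl] at *
  rw [h, mul_comm]

lemma mf_integral_qf_decomp {p : ℕ} {f : Ω → Fin p → ℝ} (hf : MemLp f 2 μ)
    (M : Matrix (Fin p) (Fin p) ℝ) :
    ∫ a, f a ⬝ᵥ M *ᵥ f a ∂μ
      = (∫ a, (f a - ∫ b, f b ∂μ) ⬝ᵥ M *ᵥ (f a - ∫ b, f b ∂μ) ∂μ)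
        + (∫ b, f b ∂μ) ⬝ᵥ M *ᵥ (∫ b, f b ∂μ) := by
  set c := ∫ b, f b ∂μ with hc
  have hfInt : Integrable f μ := hf.integrable one_le_two
  have hpt : ∀ a, (f a - c) ⬝ᵥ M *ᵥ (f a - c)
      = f a ⬝ᵥ M *ᵥ f a - f a ⬝ᵥ (M *ᵥ c) - c ⬝ᵥ (M *ᵥ f a) + c ⬝ᵥ M *ᵥ c := by
    intro a
    rw [Matrix.mulVec_sub, sub_dotProduct, dotProduct_sub, dotProduct_sub]
    ring
  have h1 : Integrable (fun a => f a ⬝ᵥ M *ᵥ f a) μ := mf_integrable_qf hf hf M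
  have h2 : Integrable (fun a => f a ⬝ᵥ (M *ᵥ c)) μ := mf_integrable_dot_const hfInt _
  have h3 : Integrable (fun a => c ⬝ᵥ (M *ᵥ f a)) μ := by
    have := mf_integrable_dot_const (μ := μ) (f := fun a => M *ᵥ f a) ?_ c
    · exact this.congr (Filter.Eventually.of_forall (fun a => dotProduct_comm _ _))
    · exact mf_integrable_pi (fun i => by
        have hmv : MemLp (fun a => M *ᵥ f a) 2 μ := mf_memLp_mulVec M hf
        exact (mf_memLp_apply hmv i).integrable one_le_two)
  calc ∫ a, f a ⬝ᵥ M *ᵥ f a ∂μ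
      = ∫ a, ((f a - c) ⬝ᵥ M *ᵥ (f a - c) + f a ⬝ᵥ (M *ᵥ c) + c ⬝ᵥ (M *ᵥ f a) - c ⬝ᵥ M *ᵥ c) ∂μ := by
        congr 1; funext a; rw [hpt a]; ring
    _ = (∫ a, (f a - c) ⬝ᵥ M *ᵥ (f a - c) ∂μ) + (∫ a, f a ⬝ᵥ (M *ᵥ c) ∂μ)
        + (∫ a, c ⬝ᵥ (M *ᵥ f a) ∂μ) - c ⬝ᵥ M *ᵥ c := by
        have hq : Integrable (fun a => (f a - c) ⬝ᵥ M *ᵥ (f a - c)) μ :=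
          mf_integrable_qf (hf.sub (memLp_const c)) (hf.sub (memLp_const c)) M
        have hq2 : Integrable (fun a => (f a - c) ⬝ᵥ M *ᵥ (f a - c) + f a ⬝ᵥ M *ᵥ c) μ := hq.add h2
        have hq3 : Integrable (fun a => (f a - c) ⬝ᵥ M *ᵥ (f a - c) + f a ⬝ᵥ M *ᵥ c
            + c ⬝ᵥ M *ᵥ f a) μ := hq2.add h3
        rw [integral_sub hq3 (integrable_const _), integral_add hq2 h3,
          integral_add hq h2, integral_const]
        simp
    _ = (∫ a, (f a - c) ⬝ᵥ M *ᵥ (f a - c) ∂μ) + c ⬝ᵥ M *ᵥ c := by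
        rw [mf_integral_dot_left hfInt, mf_integral_dot_right
          (mf_integrable_pi (fun i => (mf_memLp_apply (mf_memLp_mulVec M hf) i).integrable one_le_two)),
          mf_integral_mulVec M hfInt, ← hc]
        ring

end Helpers2


lemma h1_gen {p q r : Type*} [Fintype p] [Fintype q] [Fintype r]
    (M : Matrix p q ℝ) (N : Matrix p r ℝ) (w : q → ℝ) (z : r → ℝ) :
    w ⬝ᵥ (Mᵀ * N) *ᵥ z = (M *ᵥ w) ⬝ᵥ (N *ᵥ z) := by
  rw [← Matrix.mulVec_mulVec, Matrix.dotProduct_mulVec, Matrix.vecMul_transpose]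

lemma quad_key {n l m : ℕ} (P1 P2 Pk : Matrix (Fin n) (Fin n) ℝ)
    (hP1 : P1ᵀ = P1) (hP2 : P2ᵀ = P2)
    (A C : Matrix (Fin n) (Fin n) ℝ) (B D : Matrix (Fin n) (Fin l) ℝ)
    (Φ : Matrix (Fin m) (Fin n) ℝ) (γ : ℝ) (y : Fin n → ℝ) (v : Fin l → ℝ) :
    (Sum.elim y v) ⬝ᵥ (Matrix.fromBlocks
        (-Pk + Aᵀ * P1 * A + Cᵀ * P2 * C - Φᵀ * Φ)
        (Aᵀ * P1 * B + Cᵀ * P2 * D)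
        ((Aᵀ * P1 * B + Cᵀ * P2 * D)ᵀ)
        (γ^2 • (1 : Matrix (Fin l) (Fin l) ℝ) + Bᵀ * P1 * B + Dᵀ * P2 * D)) *ᵥ
      (Sum.elim y v)
    = (A *ᵥ y + B *ᵥ v) ⬝ᵥ P1 *ᵥ (A *ᵥ y + B *ᵥ v)
      + (C *ᵥ y + D *ᵥ v) ⬝ᵥ P2 *ᵥ (C *ᵥ y + D *ᵥ v)
      - y ⬝ᵥ Pk *ᵥ y - (Φ *ᵥ y) ⬝ᵥ (Φ *ᵥ y) + γ^2 * (v ⬝ᵥ v) := by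
  have hT : (Aᵀ * P1 * B + Cᵀ * P2 * D)ᵀ = Bᵀ * (P1 * A) + Dᵀ * (P2 * C) := by
    simp [Matrix.transpose_add, Matrix.transpose_mul, hP1, hP2, Matrix.mul_assoc]
  rw [hT, Matrix.fromBlocks_mulVec, sumElim_dotProduct_sumElim]
  simp only [Matrix.add_mulVec, Matrix.sub_mulVec, Matrix.neg_mulVec,
    Matrix.mulVec_add, dotProduct_add, add_dotProduct, dotProduct_sub, dotProduct_neg,
    Matrix.smul_mulVec, Matrix.one_mulVec, dotProduct_smul, smul_eq_mul,
    Matrix.mul_assoc]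
  rw [h1_gen A (P1 * A), h1_gen A (P1 * B), h1_gen C (P2 * C), h1_gen C (P2 * D),
    h1_gen Φ Φ, h1_gen B (P1 * A), h1_gen D (P2 * C), h1_gen B (P1 * B),
    h1_gen D (P2 * D)]
  simp only [← Matrix.mulVec_mulVec, Sum.elim_comp_inl, Sum.elim_comp_inr]
  ring
section Step
variable {Ω : Type*} [MeasurableSpace Ω] {μ : Measure Ω} [IsProbabilityMeasure μ]

lemma mf_contMulVec {q r : ℕ} (M : Matrix (Fin r) (Fin q) ℝ) :
    Continuous (fun v : Fin q → ℝ => M *ᵥ v) :=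
  (LinearMap.toContinuousLinearMap (Matrix.mulVecLin M)).continuous

lemma mf_step {n l m : ℕ}
    (A At C Ct : Matrix (Fin n) (Fin n) ℝ) (B Bt D Dt : Matrix (Fin n) (Fin l) ℝ)
    (Φ : Matrix (Fin m) (Fin n) ℝ)
    (P' Pk Q' Qk : Matrix (Fin n) (Fin n) ℝ) (hP' : P'ᵀ = P') (hQ' : Q'ᵀ = Q')
    (γ : ℝ)
    (ω : Ω → ℝ) (hω : MemLp ω 2 μ) (hωm : ∫ a, ω a ∂μ = 0) (hωv : ∫ a, ω a * ω a ∂μ = 1)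
    (y : Ω → Fin n → ℝ) (w : Ω → Fin l → ℝ) (hy : MemLp y 2 μ) (hw : MemLp w 2 μ)
    (hind : IndepFun (fun a => (y a, w a)) ω μ)
    (x' : Ω → Fin n → ℝ)
    (hx' : ∀ a, x' a = A *ᵥ y a + At *ᵥ (∫ b, y b ∂μ) + B *ᵥ w a + Bt *ᵥ (∫ b, w b ∂μ)
      + ω a • (C *ᵥ y a + Ct *ᵥ (∫ b, y b ∂μ) + D *ᵥ w a + Dt *ᵥ (∫ b, w b ∂μ))) :
    MemLp x' 2 μ ∧
    (∫ b, x' b ∂μ) = (A + At) *ᵥ (∫ b, y b ∂μ) + (B + Bt) *ᵥ (∫ b, w b ∂μ) ∧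
    ((∫ a, (Sum.elim (y a - ∫ b, y b ∂μ) (w a - ∫ b, w b ∂μ)) ⬝ᵥ
        (Matrix.fromBlocks (-Pk + Aᵀ * P' * A + Cᵀ * P' * C - Φᵀ * Φ)
          (Aᵀ * P' * B + Cᵀ * P' * D) ((Aᵀ * P' * B + Cᵀ * P' * D)ᵀ)
          (γ^2 • (1 : Matrix (Fin l) (Fin l) ℝ) + Bᵀ * P' * B + Dᵀ * P' * D)) *ᵥ
        (Sum.elim (y a - ∫ b, y b ∂μ) (w a - ∫ b, w b ∂μ)) ∂μ)
      + ((Sum.elim (∫ b, y b ∂μ) (∫ b, w b ∂μ)) ⬝ᵥ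
        (Matrix.fromBlocks (-Qk + (A + At)ᵀ * Q' * (A + At) + (C + Ct)ᵀ * P' * (C + Ct) - Φᵀ * Φ)
          ((A + At)ᵀ * Q' * (B + Bt) + (C + Ct)ᵀ * P' * (D + Dt))
          (((A + At)ᵀ * Q' * (B + Bt) + (C + Ct)ᵀ * P' * (D + Dt))ᵀ)
          (γ^2 • (1 : Matrix (Fin l) (Fin l) ℝ) + (B + Bt)ᵀ * Q' * (B + Bt)
            + (D + Dt)ᵀ * P' * (D + Dt))) *ᵥ
        (Sum.elim (∫ b, y b ∂μ) (∫ b, w b ∂μ)))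
      = (∫ a, (γ^2 * (w a ⬝ᵥ w a) - (Φ *ᵥ y a) ⬝ᵥ (Φ *ᵥ y a)) ∂μ)
        + (((∫ a, (x' a - ∫ b, x' b ∂μ) ⬝ᵥ P' *ᵥ (x' a - ∫ b, x' b ∂μ) ∂μ)
            + (∫ b, x' b ∂μ) ⬝ᵥ Q' *ᵥ (∫ b, x' b ∂μ))
          - ((∫ a, (y a - ∫ b, y b ∂μ) ⬝ᵥ Pk *ᵥ (y a - ∫ b, y b ∂μ) ∂μ)
            + (∫ b, y b ∂μ) ⬝ᵥ Qk *ᵥ (∫ b, y b ∂μ)))) := by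
  have hyInt : Integrable y μ := hy.integrable one_le_two
  have hwInt : Integrable w μ := hw.integrable one_le_two
  have hωInt : Integrable ω μ := hω.integrable one_le_two
  set ybar : Fin n → ℝ := ∫ b, y b ∂μ with hybar
  set wbar : Fin l → ℝ := ∫ b, w b ∂μ with hwbar
  have hyt2 : MemLp (fun a => y a - ybar) 2 μ := hy.sub (memLp_const ybar)
  have hwt2 : MemLp (fun a => w a - wbar) 2 μ := hw.sub (memLp_const wbar)
  have hu2 : MemLp (fun a => A *ᵥ (y a - ybar) + B *ᵥ (w a - wbar)) 2 μ :=
    (mf_memLp_mulVec A hyt2).add (mf_memLp_mulVec B hwt2)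
  have hv2 : MemLp (fun a => C *ᵥ y a + Ct *ᵥ ybar + D *ᵥ w a + Dt *ᵥ wbar) 2 μ :=
    (((mf_memLp_mulVec C hy).add (memLp_const _)).add (mf_memLp_mulVec D hw)).add (memLp_const _)
  have hvt2 : MemLp (fun a => C *ᵥ (y a - ybar) + D *ᵥ (w a - wbar)) 2 μ :=
    (mf_memLp_mulVec C hyt2).add (mf_memLp_mulVec D hwt2)
  -- measurable maps on the product space
  have hψv : Measurable (fun p : (Fin n → ℝ) × (Fin l → ℝ) =>
      C *ᵥ p.1 + Ct *ᵥ ybar + D *ᵥ p.2 + Dt *ᵥ wbar) :=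
    (((((mf_contMulVec C).comp continuous_fst).add continuous_const).add
      ((mf_contMulVec D).comp continuous_snd)).add continuous_const).measurable
  have hψu : Measurable (fun p : (Fin n → ℝ) × (Fin l → ℝ) =>
      A *ᵥ (p.1 - ybar) + B *ᵥ (p.2 - wbar)) :=
    (((mf_contMulVec A).comp (continuous_fst.sub continuous_const)).add
      ((mf_contMulVec B).comp (continuous_snd.sub continuous_const))).measurable
  -- independence of composite scalars from ω
  have hvind : ∀ i, IndepFun (fun a => (C *ᵥ y a + Ct *ᵥ ybar + D *ᵥ w a + Dt *ᵥ wbar) i) ω μ :=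
    fun i => mf_indep_of_comp hind ((measurable_pi_apply i).comp hψv) (fun a => rfl)
  have hcrossind : IndepFun (fun a =>
      (A *ᵥ (y a - ybar) + B *ᵥ (w a - wbar)) ⬝ᵥ P' *ᵥ (C *ᵥ y a + Ct *ᵥ ybar + D *ᵥ w a + Dt *ᵥ wbar)
      + (C *ᵥ y a + Ct *ᵥ ybar + D *ᵥ w a + Dt *ᵥ wbar) ⬝ᵥ P' *ᵥ (A *ᵥ (y a - ybar) + B *ᵥ (w a - wbar))) ω μ :=
    mf_indep_of_comp hind
      ((mf_measurable_dot hψu (mf_measurable_mulVec hψv P')).add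
        (mf_measurable_dot hψv (mf_measurable_mulVec hψu P'))) (fun a => rfl)
  have hvqind : IndepFun (fun a =>
      (C *ᵥ y a + Ct *ᵥ ybar + D *ᵥ w a + Dt *ᵥ wbar) ⬝ᵥ P' *ᵥ
        (C *ᵥ y a + Ct *ᵥ ybar + D *ᵥ w a + Dt *ᵥ wbar)) ω μ :=
    mf_indep_of_comp hind (mf_measurable_dot hψv (mf_measurable_mulVec hψv P')) (fun a => rfl)
  -- integrability of the noise-coupled part
  have hvInt : Integrable (fun a => C *ᵥ y a + Ct *ᵥ ybar + D *ᵥ w a + Dt *ᵥ wbar) μ :=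
    hv2.integrable one_le_two
  have hωvInt : Integrable (fun a =>
      ω a • (C *ᵥ y a + Ct *ᵥ ybar + D *ᵥ w a + Dt *ᵥ wbar)) μ := by
    refine mf_integrable_pi (fun i => ?_)
    have h := mf_indep_integrable_mul (hvind i) (mf_integrable_apply hvInt i) hωInt
    exact h
  have hωvZero : (∫ a, ω a • (C *ᵥ y a + Ct *ᵥ ybar + D *ᵥ w a + Dt *ᵥ wbar) ∂μ)
      = (0 : Fin n → ℝ) := by
    funext i
    rw [mf_integral_apply hωvInt i]
    have h0 := mf_indep_integral_mul (hvind i) (mf_integrable_apply hvInt i) hωInt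
    have h1 : (∫ a, (ω a • (C *ᵥ y a + Ct *ᵥ ybar + D *ᵥ w a + Dt *ᵥ wbar)) i ∂μ)
        = ∫ a, ω a * (C *ᵥ y a + Ct *ᵥ ybar + D *ᵥ w a + Dt *ᵥ wbar) i ∂μ := rfl
    rw [h1, h0, hωm, zero_mul]
    rfl
  -- the noiseless part
  have hg2 : MemLp (fun a => A *ᵥ y a + At *ᵥ ybar + B *ᵥ w a + Bt *ᵥ wbar) 2 μ :=
    (((mf_memLp_mulVec A hy).add (memLp_const _)).add (mf_memLp_mulVec B hw)).add (memLp_const _)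
  have hgInt : Integrable (fun a => A *ᵥ y a + At *ᵥ ybar + B *ᵥ w a + Bt *ᵥ wbar) μ :=
    hg2.integrable one_le_two
  have hxdecomp : ∀ a, x' a = (A *ᵥ y a + At *ᵥ ybar + B *ᵥ w a + Bt *ᵥ wbar)
      + ω a • (C *ᵥ y a + Ct *ᵥ ybar + D *ᵥ w a + Dt *ᵥ wbar) := fun a => hx' a
  -- mean of x'
  have hxbar : (∫ b, x' b ∂μ) = (A + At) *ᵥ ybar + (B + Bt) *ᵥ wbar := by
    have h1 : (∫ b, x' b ∂μ) = ∫ b, ((A *ᵥ y b + At *ᵥ ybar + B *ᵥ w b + Bt *ᵥ wbar)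
        + ω b • (C *ᵥ y b + Ct *ᵥ ybar + D *ᵥ w b + Dt *ᵥ wbar)) ∂μ := by
      congr 1; funext b; exact hxdecomp b
    rw [h1, integral_add hgInt hωvInt, hωvZero, add_zero]
    have h2 : Integrable (fun b => A *ᵥ y b) μ := (mf_memLp_mulVec A hy).integrable one_le_two
    have hBw : Integrable (fun b => B *ᵥ w b) μ := (mf_memLp_mulVec B hw).integrable one_le_two
    have h3 : Integrable (fun b => A *ᵥ y b + At *ᵥ ybar) μ := h2.add (integrable_const _)
    have h4 : Integrable (fun b => A *ᵥ y b + At *ᵥ ybar + B *ᵥ w b) μ := h3.add hBw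
    rw [integral_add h4 (integrable_const _), integral_add h3 hBw,
      integral_add h2 (integrable_const _), integral_const, integral_const,
      mf_integral_mulVec A hyInt, mf_integral_mulVec B hwInt, ← hybar, ← hwbar]
    simp only [measure_univ, probReal_univ, ENNReal.toReal_one, one_smul, Matrix.add_mulVec]
    abel
  -- square integrability of x'
  have hωv2 : MemLp (fun a =>
      ω a • (C *ᵥ y a + Ct *ᵥ ybar + D *ᵥ w a + Dt *ᵥ wbar)) 2 μ := by
    refine mf_memLp_pi (fun i => ?_)
    have haesm : AEStronglyMeasurable
        (fun a => (ω a • (C *ᵥ y a + Ct *ᵥ ybar + D *ᵥ w a + Dt *ᵥ wbar)) i) μ := by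
      exact hω.aestronglyMeasurable.mul (mf_memLp_apply hv2 i).aestronglyMeasurable
    refine (memLp_two_iff_integrable_sq haesm).mpr ?_
    have hsqind : IndepFun
        (fun a => (C *ᵥ y a + Ct *ᵥ ybar + D *ᵥ w a + Dt *ᵥ wbar) i
          * (C *ᵥ y a + Ct *ᵥ ybar + D *ᵥ w a + Dt *ᵥ wbar) i)
        (fun a => ω a * ω a) μ :=
      (hvind i).comp (measurable_id.mul measurable_id) (measurable_id.mul measurable_id)
    have hInt := mf_indep_integrable_mul hsqind
      (mf_mul_integrable (mf_memLp_apply hv2 i) (mf_memLp_apply hv2 i))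
      (mf_mul_integrable hω hω)
    refine hInt.congr (Filter.Eventually.of_forall (fun a => ?_))
    simp only [Pi.smul_apply, smul_eq_mul]
    ring
  have hx'2 : MemLp x' 2 μ :=
    (hg2.add hωv2).ae_eq (Filter.Eventually.of_forall (fun a => (hxdecomp a).symm))
  refine ⟨hx'2, hxbar, ?_⟩
  -- the five integrable quadratic pieces
  have hIq1 : Integrable (fun a => (A *ᵥ (y a - ybar) + B *ᵥ (w a - wbar)) ⬝ᵥ P' *ᵥ
      (A *ᵥ (y a - ybar) + B *ᵥ (w a - wbar))) μ := mf_integrable_qf hu2 hu2 P'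
  have hIq2 : Integrable (fun a => (C *ᵥ (y a - ybar) + D *ᵥ (w a - wbar)) ⬝ᵥ P' *ᵥ
      (C *ᵥ (y a - ybar) + D *ᵥ (w a - wbar))) μ := mf_integrable_qf hvt2 hvt2 P'
  have hIq3 : Integrable (fun a => (y a - ybar) ⬝ᵥ Pk *ᵥ (y a - ybar)) μ :=
    mf_integrable_qf hyt2 hyt2 Pk
  have hIq4 : Integrable (fun a => (Φ *ᵥ (y a - ybar)) ⬝ᵥ (Φ *ᵥ (y a - ybar))) μ :=
    mf_integrable_dot (mf_memLp_mulVec Φ hyt2) (mf_memLp_mulVec Φ hyt2)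
  have hIq5 : Integrable (fun a => γ^2 * ((w a - wbar) ⬝ᵥ (w a - wbar))) μ :=
    (mf_integrable_dot hwt2 hwt2).const_mul _
  -- step A : the M-part integral
  have hMterm :
      (∫ a, (Sum.elim (y a - ybar) (w a - wbar)) ⬝ᵥ
        (Matrix.fromBlocks (-Pk + Aᵀ * P' * A + Cᵀ * P' * C - Φᵀ * Φ)
          (Aᵀ * P' * B + Cᵀ * P' * D) ((Aᵀ * P' * B + Cᵀ * P' * D)ᵀ)
          (γ^2 • (1 : Matrix (Fin l) (Fin l) ℝ) + Bᵀ * P' * B + Dᵀ * P' * D)) *ᵥ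
        (Sum.elim (y a - ybar) (w a - wbar)) ∂μ)
      = (∫ a, (A *ᵥ (y a - ybar) + B *ᵥ (w a - wbar)) ⬝ᵥ P' *ᵥ
            (A *ᵥ (y a - ybar) + B *ᵥ (w a - wbar)) ∂μ)
        + (∫ a, (C *ᵥ (y a - ybar) + D *ᵥ (w a - wbar)) ⬝ᵥ P' *ᵥ
            (C *ᵥ (y a - ybar) + D *ᵥ (w a - wbar)) ∂μ)
        - (∫ a, (y a - ybar) ⬝ᵥ Pk *ᵥ (y a - ybar) ∂μ)
        - (∫ a, (Φ *ᵥ (y a - ybar)) ⬝ᵥ (Φ *ᵥ (y a - ybar)) ∂μ)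
        + γ^2 * (∫ a, (w a - wbar) ⬝ᵥ (w a - wbar) ∂μ) := by
    have e1 : (∫ a, (Sum.elim (y a - ybar) (w a - wbar)) ⬝ᵥ
        (Matrix.fromBlocks (-Pk + Aᵀ * P' * A + Cᵀ * P' * C - Φᵀ * Φ)
          (Aᵀ * P' * B + Cᵀ * P' * D) ((Aᵀ * P' * B + Cᵀ * P' * D)ᵀ)
          (γ^2 • (1 : Matrix (Fin l) (Fin l) ℝ) + Bᵀ * P' * B + Dᵀ * P' * D)) *ᵥ
        (Sum.elim (y a - ybar) (w a - wbar)) ∂μ)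
        = ∫ a, ((A *ᵥ (y a - ybar) + B *ᵥ (w a - wbar)) ⬝ᵥ P' *ᵥ
            (A *ᵥ (y a - ybar) + B *ᵥ (w a - wbar))
          + (C *ᵥ (y a - ybar) + D *ᵥ (w a - wbar)) ⬝ᵥ P' *ᵥ
            (C *ᵥ (y a - ybar) + D *ᵥ (w a - wbar))
          - (y a - ybar) ⬝ᵥ Pk *ᵥ (y a - ybar)
          - (Φ *ᵥ (y a - ybar)) ⬝ᵥ (Φ *ᵥ (y a - ybar))
          + γ^2 * ((w a - wbar) ⬝ᵥ (w a - wbar))) ∂μ := by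
      congr 1; funext a
      exact quad_key P' P' Pk hP' hP' A C B D Φ γ _ _
    rw [e1]
    have i12 : Integrable (fun a =>
        (A *ᵥ (y a - ybar) + B *ᵥ (w a - wbar)) ⬝ᵥ P' *ᵥ (A *ᵥ (y a - ybar) + B *ᵥ (w a - wbar))
        + (C *ᵥ (y a - ybar) + D *ᵥ (w a - wbar)) ⬝ᵥ P' *ᵥ
          (C *ᵥ (y a - ybar) + D *ᵥ (w a - wbar))) μ := hIq1.add hIq2
    have i123 : Integrable (fun a =>
        (A *ᵥ (y a - ybar) + B *ᵥ (w a - wbar)) ⬝ᵥ P' *ᵥ (A *ᵥ (y a - ybar) + B *ᵥ (w a - wbar))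
        + (C *ᵥ (y a - ybar) + D *ᵥ (w a - wbar)) ⬝ᵥ P' *ᵥ
          (C *ᵥ (y a - ybar) + D *ᵥ (w a - wbar))
        - (y a - ybar) ⬝ᵥ Pk *ᵥ (y a - ybar)) μ := i12.sub hIq3
    have i1234 : Integrable (fun a =>
        (A *ᵥ (y a - ybar) + B *ᵥ (w a - wbar)) ⬝ᵥ P' *ᵥ (A *ᵥ (y a - ybar) + B *ᵥ (w a - wbar))
        + (C *ᵥ (y a - ybar) + D *ᵥ (w a - wbar)) ⬝ᵥ P' *ᵥ
          (C *ᵥ (y a - ybar) + D *ᵥ (w a - wbar))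
        - (y a - ybar) ⬝ᵥ Pk *ᵥ (y a - ybar)
        - (Φ *ᵥ (y a - ybar)) ⬝ᵥ (Φ *ᵥ (y a - ybar))) μ := i123.sub hIq4
    rw [integral_add i1234 hIq5, integral_sub i123 hIq4, integral_sub i12 hIq3,
      integral_add hIq1 hIq2, integral_const_mul]
  rw [hMterm]
  -- pointwise decomposition of x' - mean
  have hxtilde : ∀ a, x' a - ((A + At) *ᵥ ybar + (B + Bt) *ᵥ wbar)
      = (A *ᵥ (y a - ybar) + B *ᵥ (w a - wbar))
        + ω a • (C *ᵥ y a + Ct *ᵥ ybar + D *ᵥ w a + Dt *ᵥ wbar) := by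
    intro a
    rw [hx' a]
    simp only [Matrix.add_mulVec, Matrix.mulVec_sub]
    abel
  have hptx : ∀ a, (x' a - ∫ b, x' b ∂μ) ⬝ᵥ P' *ᵥ (x' a - ∫ b, x' b ∂μ)
      = (A *ᵥ (y a - ybar) + B *ᵥ (w a - wbar)) ⬝ᵥ P' *ᵥ
          (A *ᵥ (y a - ybar) + B *ᵥ (w a - wbar))
        + ω a * ((A *ᵥ (y a - ybar) + B *ᵥ (w a - wbar)) ⬝ᵥ P' *ᵥ
            (C *ᵥ y a + Ct *ᵥ ybar + D *ᵥ w a + Dt *ᵥ wbar)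
          + (C *ᵥ y a + Ct *ᵥ ybar + D *ᵥ w a + Dt *ᵥ wbar) ⬝ᵥ P' *ᵥ
            (A *ᵥ (y a - ybar) + B *ᵥ (w a - wbar)))
        + (ω a * ω a) * ((C *ᵥ y a + Ct *ᵥ ybar + D *ᵥ w a + Dt *ᵥ wbar) ⬝ᵥ P' *ᵥ
            (C *ᵥ y a + Ct *ᵥ ybar + D *ᵥ w a + Dt *ᵥ wbar)) := by
    intro a
    rw [hxbar, hxtilde a]
    simp only [Matrix.mulVec_add, Matrix.mulVec_smul, dotProduct_add, add_dotProduct,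
      smul_dotProduct, dotProduct_smul, smul_eq_mul]
    ring
  have hIcrossBase : Integrable (fun a =>
      (A *ᵥ (y a - ybar) + B *ᵥ (w a - wbar)) ⬝ᵥ P' *ᵥ
        (C *ᵥ y a + Ct *ᵥ ybar + D *ᵥ w a + Dt *ᵥ wbar)
      + (C *ᵥ y a + Ct *ᵥ ybar + D *ᵥ w a + Dt *ᵥ wbar) ⬝ᵥ P' *ᵥ
        (A *ᵥ (y a - ybar) + B *ᵥ (w a - wbar))) μ :=
    (mf_integrable_qf hu2 hv2 P').add (mf_integrable_qf hv2 hu2 P')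
  have hIvqBase : Integrable (fun a =>
      (C *ᵥ y a + Ct *ᵥ ybar + D *ᵥ w a + Dt *ᵥ wbar) ⬝ᵥ P' *ᵥ
        (C *ᵥ y a + Ct *ᵥ ybar + D *ᵥ w a + Dt *ᵥ wbar)) μ := mf_integrable_qf hv2 hv2 P'
  have hIcross : Integrable (fun a => ω a *
      ((A *ᵥ (y a - ybar) + B *ᵥ (w a - wbar)) ⬝ᵥ P' *ᵥ
        (C *ᵥ y a + Ct *ᵥ ybar + D *ᵥ w a + Dt *ᵥ wbar)
      + (C *ᵥ y a + Ct *ᵥ ybar + D *ᵥ w a + Dt *ᵥ wbar) ⬝ᵥ P' *ᵥ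
        (A *ᵥ (y a - ybar) + B *ᵥ (w a - wbar)))) μ :=
    mf_indep_integrable_mul hcrossind hIcrossBase hωInt
  have hIvq : Integrable (fun a => (ω a * ω a) *
      ((C *ᵥ y a + Ct *ᵥ ybar + D *ᵥ w a + Dt *ᵥ wbar) ⬝ᵥ P' *ᵥ
        (C *ᵥ y a + Ct *ᵥ ybar + D *ᵥ w a + Dt *ᵥ wbar))) μ :=
    mf_indep_integrable_mul (mf_indep_sq hvqind) hIvqBase (mf_mul_integrable hω hω)
  have hEcross : (∫ a, ω a *
      ((A *ᵥ (y a - ybar) + B *ᵥ (w a - wbar)) ⬝ᵥ P' *ᵥ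
        (C *ᵥ y a + Ct *ᵥ ybar + D *ᵥ w a + Dt *ᵥ wbar)
      + (C *ᵥ y a + Ct *ᵥ ybar + D *ᵥ w a + Dt *ᵥ wbar) ⬝ᵥ P' *ᵥ
        (A *ᵥ (y a - ybar) + B *ᵥ (w a - wbar))) ∂μ) = 0 := by
    rw [mf_indep_integral_mul hcrossind hIcrossBase hωInt, hωm, zero_mul]
  have hEvq : (∫ a, (ω a * ω a) *
      ((C *ᵥ y a + Ct *ᵥ ybar + D *ᵥ w a + Dt *ᵥ wbar) ⬝ᵥ P' *ᵥ
        (C *ᵥ y a + Ct *ᵥ ybar + D *ᵥ w a + Dt *ᵥ wbar)) ∂μ)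
      = ∫ a, (C *ᵥ y a + Ct *ᵥ ybar + D *ᵥ w a + Dt *ᵥ wbar) ⬝ᵥ P' *ᵥ
        (C *ᵥ y a + Ct *ᵥ ybar + D *ᵥ w a + Dt *ᵥ wbar) ∂μ := by
    rw [mf_indep_integral_mul (mf_indep_sq hvqind) hIvqBase (mf_mul_integrable hω hω), hωv, one_mul]
  -- step (a)
  have hstepa : (∫ a, (x' a - ∫ b, x' b ∂μ) ⬝ᵥ P' *ᵥ (x' a - ∫ b, x' b ∂μ) ∂μ)
      = (∫ a, (A *ᵥ (y a - ybar) + B *ᵥ (w a - wbar)) ⬝ᵥ P' *ᵥ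
          (A *ᵥ (y a - ybar) + B *ᵥ (w a - wbar)) ∂μ)
        + ∫ a, (C *ᵥ y a + Ct *ᵥ ybar + D *ᵥ w a + Dt *ᵥ wbar) ⬝ᵥ P' *ᵥ
          (C *ᵥ y a + Ct *ᵥ ybar + D *ᵥ w a + Dt *ᵥ wbar) ∂μ := by
    have e : (∫ a, (x' a - ∫ b, x' b ∂μ) ⬝ᵥ P' *ᵥ (x' a - ∫ b, x' b ∂μ) ∂μ)
        = ∫ a, ((A *ᵥ (y a - ybar) + B *ᵥ (w a - wbar)) ⬝ᵥ P' *ᵥ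
            (A *ᵥ (y a - ybar) + B *ᵥ (w a - wbar))
          + ω a * ((A *ᵥ (y a - ybar) + B *ᵥ (w a - wbar)) ⬝ᵥ P' *ᵥ
              (C *ᵥ y a + Ct *ᵥ ybar + D *ᵥ w a + Dt *ᵥ wbar)
            + (C *ᵥ y a + Ct *ᵥ ybar + D *ᵥ w a + Dt *ᵥ wbar) ⬝ᵥ P' *ᵥ
              (A *ᵥ (y a - ybar) + B *ᵥ (w a - wbar)))
          + (ω a * ω a) * ((C *ᵥ y a + Ct *ᵥ ybar + D *ᵥ w a + Dt *ᵥ wbar) ⬝ᵥ P' *ᵥ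
              (C *ᵥ y a + Ct *ᵥ ybar + D *ᵥ w a + Dt *ᵥ wbar))) ∂μ := by
      congr 1; funext a; exact hptx a
    rw [e]
    have i12 : Integrable (fun a =>
        (A *ᵥ (y a - ybar) + B *ᵥ (w a - wbar)) ⬝ᵥ P' *ᵥ
          (A *ᵥ (y a - ybar) + B *ᵥ (w a - wbar))
        + ω a * ((A *ᵥ (y a - ybar) + B *ᵥ (w a - wbar)) ⬝ᵥ P' *ᵥ
            (C *ᵥ y a + Ct *ᵥ ybar + D *ᵥ w a + Dt *ᵥ wbar)
          + (C *ᵥ y a + Ct *ᵥ ybar + D *ᵥ w a + Dt *ᵥ wbar) ⬝ᵥ P' *ᵥ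
            (A *ᵥ (y a - ybar) + B *ᵥ (w a - wbar)))) μ := hIq1.add hIcross
    rw [integral_add i12 hIvq, integral_add hIq1 hIcross, hEcross, add_zero, hEvq]
  rw [hstepa]
  -- step (b) : mean of v and variance decomposition for v
  have hvbarEq : (∫ a, (C *ᵥ y a + Ct *ᵥ ybar + D *ᵥ w a + Dt *ᵥ wbar) ∂μ)
      = (C + Ct) *ᵥ ybar + (D + Dt) *ᵥ wbar := by
    have h2 : Integrable (fun b => C *ᵥ y b) μ := (mf_memLp_mulVec C hy).integrable one_le_two
    have hDw : Integrable (fun b => D *ᵥ w b) μ := (mf_memLp_mulVec D hw).integrable one_le_two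
    have h3 : Integrable (fun b => C *ᵥ y b + Ct *ᵥ ybar) μ := h2.add (integrable_const _)
    have h4 : Integrable (fun b => C *ᵥ y b + Ct *ᵥ ybar + D *ᵥ w b) μ := h3.add hDw
    rw [integral_add h4 (integrable_const _), integral_add h3 hDw,
      integral_add h2 (integrable_const _), integral_const, integral_const,
      mf_integral_mulVec C hyInt, mf_integral_mulVec D hwInt, ← hybar, ← hwbar]
    simp only [measure_univ, probReal_univ, ENNReal.toReal_one, one_smul, Matrix.add_mulVec]
    abel
  have hstepb : (∫ a, (C *ᵥ y a + Ct *ᵥ ybar + D *ᵥ w a + Dt *ᵥ wbar) ⬝ᵥ P' *ᵥ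
        (C *ᵥ y a + Ct *ᵥ ybar + D *ᵥ w a + Dt *ᵥ wbar) ∂μ)
      = (∫ a, (C *ᵥ (y a - ybar) + D *ᵥ (w a - wbar)) ⬝ᵥ P' *ᵥ
          (C *ᵥ (y a - ybar) + D *ᵥ (w a - wbar)) ∂μ)
        + ((C + Ct) *ᵥ ybar + (D + Dt) *ᵥ wbar) ⬝ᵥ P' *ᵥ
          ((C + Ct) *ᵥ ybar + (D + Dt) *ᵥ wbar) := by
    have h := mf_integral_qf_decomp hv2 P'
    rw [h, hvbarEq]
    congr 1
    congr 1
    funext a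
    have hvt_eq : (C *ᵥ y a + Ct *ᵥ ybar + D *ᵥ w a + Dt *ᵥ wbar)
        - ((C + Ct) *ᵥ ybar + (D + Dt) *ᵥ wbar)
        = C *ᵥ (y a - ybar) + D *ᵥ (w a - wbar) := by
      simp only [Matrix.add_mulVec, Matrix.mulVec_sub]
      abel
    rw [hvt_eq]
  rw [hstepb]
  -- step (c) and (d) : variance decompositions for cost terms
  have hstepc : (∫ a, w a ⬝ᵥ w a ∂μ)
      = (∫ a, (w a - wbar) ⬝ᵥ (w a - wbar) ∂μ) + wbar ⬝ᵥ wbar := by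
    have h := mf_integral_qf_decomp hw (1 : Matrix (Fin l) (Fin l) ℝ)
    simpa only [Matrix.one_mulVec, ← hwbar] using h
  have hstepd : (∫ a, (Φ *ᵥ y a) ⬝ᵥ (Φ *ᵥ y a) ∂μ)
      = (∫ a, (Φ *ᵥ (y a - ybar)) ⬝ᵥ (Φ *ᵥ (y a - ybar)) ∂μ)
        + (Φ *ᵥ ybar) ⬝ᵥ (Φ *ᵥ ybar) := by
    have h := mf_integral_qf_decomp (mf_memLp_mulVec Φ hy) (1 : Matrix (Fin m) (Fin m) ℝ)
    simp only [Matrix.one_mulVec] at h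
    rw [h, mf_integral_mulVec Φ hyInt, ← hybar]
    congr 1
    congr 1
    funext a
    rw [← Matrix.mulVec_sub]
  have hcost : (∫ a, (γ^2 * (w a ⬝ᵥ w a) - (Φ *ᵥ y a) ⬝ᵥ (Φ *ᵥ y a)) ∂μ)
      = γ^2 * (∫ a, w a ⬝ᵥ w a ∂μ) - ∫ a, (Φ *ᵥ y a) ⬝ᵥ (Φ *ᵥ y a) ∂μ := by
    rw [integral_sub ((mf_integrable_dot hw hw).const_mul _)
      (mf_integrable_dot (mf_memLp_mulVec Φ hy) (mf_memLp_mulVec Φ hy)), integral_const_mul]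
  rw [hcost, hstepc, hstepd, hxbar]
  -- the S-part via the algebraic key lemma
  have hS := quad_key Q' P' Qk hQ' hP' (A + At) (C + Ct) (B + Bt) (D + Dt) Φ γ ybar wbar
  rw [hS]
  ring
end Step

/-- Lemma 2.3 of the paper.  Representation of the cost
`J^K(x₀,ν) = Σ E[γ²‖ν‖² − ‖z‖²]`, `z(k) = Φ(k)x(k)`, through the block matrices
`M̃(P,k)` and `S̃(P,Q,k)`. -/
theorem mf_lemma23 {Ω : Type*} [MeasurableSpace Ω] (μ : Measure Ω) [IsProbabilityMeasure μ]
    (K n l m : ℕ) (γ : ℝ) (hγ : 0 < γ)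
    (A At C Ct : ℕ → Matrix (Fin n) (Fin n) ℝ)
    (B Bt D Dt : ℕ → Matrix (Fin n) (Fin l) ℝ)
    (Φ : ℕ → Matrix (Fin m) (Fin n) ℝ)
    (W : ℕ → Ω → ℝ)
    (hW2 : ∀ k ≤ K, MemLp (W k) 2 μ)
    (hWmean : ∀ k ≤ K, ∫ a, W k a ∂μ = 0)
    (hWcov : ∀ s ≤ K, ∀ t ≤ K, ∫ a, W s a * W t a ∂μ = if s = t then (1:ℝ) else 0)
    (P Q : ℕ → Matrix (Fin n) (Fin n) ℝ)
    (hP : ∀ k ≤ K + 1, (P k).IsSymm) (hQ : ∀ k ≤ K + 1, (Q k).IsSymm)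
    (x0 : Fin n → ℝ) (ν : ℕ → Ω → Fin l → ℝ)
    (x : ℕ → Ω → Fin n → ℝ)
    (hx : x = mfState μ A At C Ct B Bt D Dt W x0 ν)
    (hadm : mfAdmissible μ K W x ν) :
    (∑ k ∈ Finset.range (K + 1), ∫ a,
        (γ^2 * ((ν k a) ⬝ᵥ (ν k a)) - (Φ k *ᵥ x k a) ⬝ᵥ (Φ k *ᵥ x k a)) ∂μ)
    = (∑ k ∈ Finset.range (K + 1), ∫ a,
        (Sum.elim (x k a - ∫ b, x k b ∂μ) (ν k a - ∫ b, ν k b ∂μ)) ⬝ᵥ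
          (Matrix.fromBlocks
            (-(P k) + (A k)ᵀ * P (k+1) * A k + (C k)ᵀ * P (k+1) * C k - (Φ k)ᵀ * Φ k)
            ((A k)ᵀ * P (k+1) * B k + (C k)ᵀ * P (k+1) * D k)
            (((A k)ᵀ * P (k+1) * B k + (C k)ᵀ * P (k+1) * D k)ᵀ)
            (γ^2 • (1 : Matrix (Fin l) (Fin l) ℝ)
              + (B k)ᵀ * P (k+1) * B k + (D k)ᵀ * P (k+1) * D k)) *ᵥ
          (Sum.elim (x k a - ∫ b, x k b ∂μ) (ν k a - ∫ b, ν k b ∂μ)) ∂μ)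
      + (∑ k ∈ Finset.range (K + 1),
          (Sum.elim (∫ b, x k b ∂μ) (∫ b, ν k b ∂μ)) ⬝ᵥ
            (Matrix.fromBlocks
              (-(Q k) + (A k + At k)ᵀ * Q (k+1) * (A k + At k)
                + (C k + Ct k)ᵀ * P (k+1) * (C k + Ct k) - (Φ k)ᵀ * Φ k)
              ((A k + At k)ᵀ * Q (k+1) * (B k + Bt k)
                + (C k + Ct k)ᵀ * P (k+1) * (D k + Dt k))
              (((A k + At k)ᵀ * Q (k+1) * (B k + Bt k)
                + (C k + Ct k)ᵀ * P (k+1) * (D k + Dt k))ᵀ)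
              (γ^2 • (1 : Matrix (Fin l) (Fin l) ℝ)
                + (B k + Bt k)ᵀ * Q (k+1) * (B k + Bt k)
                + (D k + Dt k)ᵀ * P (k+1) * (D k + Dt k))) *ᵥ
            (Sum.elim (∫ b, x k b ∂μ) (∫ b, ν k b ∂μ)))
      - (∫ a, (x (K+1) a - ∫ b, x (K+1) b ∂μ) ⬝ᵥ (P (K+1)) *ᵥ
            (x (K+1) a - ∫ b, x (K+1) b ∂μ) ∂μ)
      - (∫ b, x (K+1) b ∂μ) ⬝ᵥ (Q (K+1)) *ᵥ (∫ b, x (K+1) b ∂μ)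
      + x0 ⬝ᵥ (Q 0) *ᵥ x0 := by

  obtain ⟨hν2, hindep⟩ := hadm
  have hx0 : x 0 = fun _ : Ω => x0 := by rw [hx]; rfl
  have hxrec : ∀ k, x (k+1) = fun a =>
      A k *ᵥ x k a + At k *ᵥ (∫ b, x k b ∂μ) + B k *ᵥ ν k a + Bt k *ᵥ (∫ b, ν k b ∂μ)
      + W k a • (C k *ᵥ x k a + Ct k *ᵥ (∫ b, x k b ∂μ) + D k *ᵥ ν k a
        + Dt k *ᵥ (∫ b, ν k b ∂μ)) := by
    intro k; rw [hx]; rfl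
  have hstep : ∀ k, k ≤ K → MemLp (x k) 2 μ →
      (MemLp (x (k+1)) 2 μ ∧
        (∫ b, x (k+1) b ∂μ) = (A k + At k) *ᵥ (∫ b, x k b ∂μ)
          + (B k + Bt k) *ᵥ (∫ b, ν k b ∂μ) ∧
        ((∫ a, (Sum.elim (x k a - ∫ b, x k b ∂μ) (ν k a - ∫ b, ν k b ∂μ)) ⬝ᵥ
            (Matrix.fromBlocks
              (-(P k) + (A k)ᵀ * P (k+1) * A k + (C k)ᵀ * P (k+1) * C k - (Φ k)ᵀ * Φ k)
              ((A k)ᵀ * P (k+1) * B k + (C k)ᵀ * P (k+1) * D k)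
              (((A k)ᵀ * P (k+1) * B k + (C k)ᵀ * P (k+1) * D k)ᵀ)
              (γ^2 • (1 : Matrix (Fin l) (Fin l) ℝ)
                + (B k)ᵀ * P (k+1) * B k + (D k)ᵀ * P (k+1) * D k)) *ᵥ
            (Sum.elim (x k a - ∫ b, x k b ∂μ) (ν k a - ∫ b, ν k b ∂μ)) ∂μ)
          + ((Sum.elim (∫ b, x k b ∂μ) (∫ b, ν k b ∂μ)) ⬝ᵥ
            (Matrix.fromBlocks
              (-(Q k) + (A k + At k)ᵀ * Q (k+1) * (A k + At k)
                + (C k + Ct k)ᵀ * P (k+1) * (C k + Ct k) - (Φ k)ᵀ * Φ k)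
              ((A k + At k)ᵀ * Q (k+1) * (B k + Bt k)
                + (C k + Ct k)ᵀ * P (k+1) * (D k + Dt k))
              (((A k + At k)ᵀ * Q (k+1) * (B k + Bt k)
                + (C k + Ct k)ᵀ * P (k+1) * (D k + Dt k))ᵀ)
              (γ^2 • (1 : Matrix (Fin l) (Fin l) ℝ)
                + (B k + Bt k)ᵀ * Q (k+1) * (B k + Bt k)
                + (D k + Dt k)ᵀ * P (k+1) * (D k + Dt k))) *ᵥ
            (Sum.elim (∫ b, x k b ∂μ) (∫ b, ν k b ∂μ)))
          = (∫ a, (γ^2 * ((ν k a) ⬝ᵥ (ν k a)) - (Φ k *ᵥ x k a) ⬝ᵥ (Φ k *ᵥ x k a)) ∂μ)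
            + (((∫ a, (x (k+1) a - ∫ b, x (k+1) b ∂μ) ⬝ᵥ (P (k+1)) *ᵥ
                  (x (k+1) a - ∫ b, x (k+1) b ∂μ) ∂μ)
                + (∫ b, x (k+1) b ∂μ) ⬝ᵥ (Q (k+1)) *ᵥ (∫ b, x (k+1) b ∂μ))
              - ((∫ a, (x k a - ∫ b, x k b ∂μ) ⬝ᵥ (P k) *ᵥ (x k a - ∫ b, x k b ∂μ) ∂μ)
                + (∫ b, x k b ∂μ) ⬝ᵥ (Q k) *ᵥ (∫ b, x k b ∂μ))))) := by
    intro k hk hxk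
    exact mf_step (A k) (At k) (C k) (Ct k) (B k) (Bt k) (D k) (Dt k) (Φ k)
      (P (k+1)) (P k) (Q (k+1)) (Q k) (hP (k+1) (by omega)) (hQ (k+1) (by omega)) γ
      (W k) (hW2 k hk) (hWmean k hk) (by simpa using hWcov k hk k hk)
      (x k) (ν k) hxk (hν2 k hk) (hindep k hk) (x (k+1))
      (fun a => by rw [hxrec k])
  have hx2 : ∀ k, k ≤ K + 1 → MemLp (x k) 2 μ := by
    intro k
    induction k with
    | zero => intro _; rw [hx0]; exact memLp_const x0
    | succ k ih =>
      intro hk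
      exact (hstep k (by omega) (ih (by omega))).1
  set V : ℕ → ℝ := fun k =>
    (∫ a, (x k a - ∫ b, x k b ∂μ) ⬝ᵥ (P k) *ᵥ (x k a - ∫ b, x k b ∂μ) ∂μ)
      + (∫ b, x k b ∂μ) ⬝ᵥ (Q k) *ᵥ (∫ b, x k b ∂μ) with hV
  have hkey : ∀ k ∈ Finset.range (K + 1),
      (∫ a, (Sum.elim (x k a - ∫ b, x k b ∂μ) (ν k a - ∫ b, ν k b ∂μ)) ⬝ᵥ
          (Matrix.fromBlocks
            (-(P k) + (A k)ᵀ * P (k+1) * A k + (C k)ᵀ * P (k+1) * C k - (Φ k)ᵀ * Φ k)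
            ((A k)ᵀ * P (k+1) * B k + (C k)ᵀ * P (k+1) * D k)
            (((A k)ᵀ * P (k+1) * B k + (C k)ᵀ * P (k+1) * D k)ᵀ)
            (γ^2 • (1 : Matrix (Fin l) (Fin l) ℝ)
              + (B k)ᵀ * P (k+1) * B k + (D k)ᵀ * P (k+1) * D k)) *ᵥ
          (Sum.elim (x k a - ∫ b, x k b ∂μ) (ν k a - ∫ b, ν k b ∂μ)) ∂μ)
        + ((Sum.elim (∫ b, x k b ∂μ) (∫ b, ν k b ∂μ)) ⬝ᵥ
          (Matrix.fromBlocks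
            (-(Q k) + (A k + At k)ᵀ * Q (k+1) * (A k + At k)
              + (C k + Ct k)ᵀ * P (k+1) * (C k + Ct k) - (Φ k)ᵀ * Φ k)
            ((A k + At k)ᵀ * Q (k+1) * (B k + Bt k)
              + (C k + Ct k)ᵀ * P (k+1) * (D k + Dt k))
            (((A k + At k)ᵀ * Q (k+1) * (B k + Bt k)
              + (C k + Ct k)ᵀ * P (k+1) * (D k + Dt k))ᵀ)
            (γ^2 • (1 : Matrix (Fin l) (Fin l) ℝ)
              + (B k + Bt k)ᵀ * Q (k+1) * (B k + Bt k)
              + (D k + Dt k)ᵀ * P (k+1) * (D k + Dt k))) *ᵥ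
          (Sum.elim (∫ b, x k b ∂μ) (∫ b, ν k b ∂μ)))
      = (∫ a, (γ^2 * ((ν k a) ⬝ᵥ (ν k a)) - (Φ k *ᵥ x k a) ⬝ᵥ (Φ k *ᵥ x k a)) ∂μ)
        + (V (k+1) - V k) := by
    intro k hk
    have hk' : k ≤ K := by simpa [Nat.lt_succ_iff] using Finset.mem_range.mp hk
    exact (hstep k hk' (hx2 k (by omega))).2.2
  have hsum := Finset.sum_congr rfl hkey
  rw [Finset.sum_add_distrib, Finset.sum_add_distrib, Finset.sum_range_sub V] at hsum
  have hV0 : V 0 = x0 ⬝ᵥ (Q 0) *ᵥ x0 := by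
    simp only [hV, hx0, integral_const, measure_univ, ENNReal.toReal_one, one_smul, sub_self]
    simp
  have hVK : V (K+1) = (∫ a, (x (K+1) a - ∫ b, x (K+1) b ∂μ) ⬝ᵥ (P (K+1)) *ᵥ
      (x (K+1) a - ∫ b, x (K+1) b ∂μ) ∂μ)
      + (∫ b, x (K+1) b ∂μ) ⬝ᵥ (Q (K+1)) *ᵥ (∫ b, x (K+1) b ∂μ) := rfl
  rw [hVK, hV0] at hsum
  linarith [hsum]
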